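/- For any connected order ideal J of P, the subgraph χ_J of G_P induced by the vertex set {Λ_i^P : i ∈ gs(J)}, where gs(J) is the set of maximal elements of J with respect to ≤_P, is a connected graph. -/

import Mathlib

attribute [local instance] Classical.propDecidable

noncomputable section

open Finset

variable {n : ℕ}

/-- The comparability graph of the poset structure `P` on `Fin n`; for an order
ideal of `P`, connectivity of its induced subgraph in this graph agrees with
connectivity of the Hasse diagram. -/
def compGraph (P : PartialOrder (Fin n)) : SimpleGraph (Fin n) where
  Adj i j := i ≠ j ∧ (P.le i j ∨ P.le j i)
  symm := by
    refine ⟨fun i j h => ?_⟩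
    exact ⟨h.1.symm, h.2.symm⟩
  loopless := by
    refine ⟨fun i h => ?_⟩
    exact h.1 rfl

/-- `J` is an order ideal of the poset `P`. -/
def IsIdeal (P : PartialOrder (Fin n)) (J : Finset (Fin n)) : Prop :=
  ∀ i ∈ J, ∀ j : Fin n, P.le j i → j ∈ J

/-- The Hasse diagram of `J` as a subposet of `P` is a connected graph. -/
def JConn (P : PartialOrder (Fin n)) (J : Finset (Fin n)) : Prop :=
  ((compGraph P).induce (↑J : Set (Fin n))).Connected

/-- `J` is a connected order ideal of `P`. -/
def IsConnIdeal (P : PartialOrder (Fin n)) (J : Finset (Fin n)) : Prop :=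
  IsIdeal P J ∧ JConn P J

/-- The type of connected order ideals of `P` (the vertices of `G_P`). -/
abbrev ConnIdeal (P : PartialOrder (Fin n)) : Type :=
  {J : Finset (Fin n) // IsConnIdeal P J}

instance (P : PartialOrder (Fin n)) : Fintype (ConnIdeal P) := Fintype.ofFinite _

/-- `A` and `B` intersect nontrivially. -/
def Nontriv (A B : Finset (Fin n)) : Prop :=
  (A ∩ B).Nonempty ∧ ¬ A ⊆ B ∧ ¬ B ⊆ A

/-- The graph `G_P` on the connected order ideals of `P`, with two ideals
adjacent iff they intersect nontrivially. -/
def GP (P : PartialOrder (Fin n)) : SimpleGraph (ConnIdeal P) where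
  Adj A B := Nontriv A.1 B.1
  symm := by
    refine ⟨fun A B h => ?_⟩
    exact ⟨by rw [Finset.inter_comm]; exact h.1, h.2.2, h.2.1⟩
  loopless := by
    refine ⟨fun A h => ?_⟩
    exact h.2.1 (Finset.Subset.refl _)

instance (P : PartialOrder (Fin n)) : Fintype ((GP P).ConnectedComponent) :=
  Fintype.ofFinite _

instance (P : PartialOrder (Fin n)) : Fintype ((GP P).edgeSet) :=
  Fintype.ofFinite _

/-- `s` is an independent set of the graph `G`. -/
def IsIndep {V : Type*} (G : SimpleGraph V) (s : Finset V) : Prop :=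
  ∀ a ∈ s, ∀ b ∈ s, ¬ G.Adj a b

/-- `s` is a maximum independent set of the graph `G`. -/
def IsMaxIndep {V : Type*} (G : SimpleGraph V) (s : Finset V) : Prop :=
  IsIndep G s ∧ ∀ t : Finset V, IsIndep G t → t.card ≤ s.card

/-- `s` is a maximum independent set of the subgraph of `G` induced on the
vertex set `S` (e.g. on a connected component of `G`). -/
def IsMaxIndepOn {V : Type*} (G : SimpleGraph V) (S : Set V) (s : Finset V) : Prop :=
  ↑s ⊆ S ∧ IsIndep G s ∧ ∀ t : Finset V, ↑t ⊆ S → IsIndep G t → t.card ≤ s.card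

/-- `μ(M, J) = ⋃_{J' ∈ M, J' ⊊ J} J'`. -/
def mu (P : PartialOrder (Fin n)) (M : Finset (ConnIdeal P)) (J : Finset (Fin n)) :
    Finset (Fin n) :=
  (M.filter (fun J' => J'.1 ⊂ J)).biUnion (fun J' => J'.1)

/-- The strict order relation of the poset `F_M` associated with a maximum
independent set `M` of `G_P`: `i <_{F_M} j` iff `J_a ⊊ J_b` where `J_a, J_b ∈ M`
satisfy `J_a \ μ(M,J_a) = {i}` and `J_b \ μ(M,J_b) = {j}`. -/
def FMlt (P : PartialOrder (Fin n)) (M : Finset (ConnIdeal P)) (i j : Fin n) : Prop :=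
  ∃ Ja ∈ M, ∃ Jb ∈ M,
    Ja.1 \ mu P M Ja.1 = {i} ∧ Jb.1 \ mu P M Jb.1 = {j} ∧ Ja.1 ⊂ Jb.1

/-- The order relation of the poset `F_M`. -/
def FMle (P : PartialOrder (Fin n)) (M : Finset (ConnIdeal P)) (i j : Fin n) : Prop :=
  i = j ∨ FMlt P M i j

/-- Strict relation associated with the relation `le`. -/
def ltRel (le : Fin n → Fin n → Prop) (i j : Fin n) : Prop := le i j ∧ i ≠ j

/-- `j` covers `i` in the order given by the relation `le`. -/
def CovRel (le : Fin n → Fin n → Prop) (i j : Fin n) : Prop :=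
  ltRel le i j ∧ ∀ k : Fin n, ltRel le i k → ¬ ltRel le k j

/-- The principal order ideal `Λ_i = {j : j ≤ i}` of the order given by `le`. -/
def LamRel (le : Fin n → Fin n → Prop) (i : Fin n) : Finset (Fin n) :=
  Finset.univ.filter (fun j => le j i)

/-- The descent set of a forest order given by the relation `le`:
elements `i` whose parent (the element covering `i`) is smaller than `i`. -/
def DesRel (le : Fin n → Fin n → Prop) : Finset (Fin n) :=
  Finset.univ.filter (fun i => ∃ j : Fin n, CovRel le i j ∧ j < i)

/-- `Des(M) = Des(F_M)`. -/
def DesM (P : PartialOrder (Fin n)) (M : Finset (ConnIdeal P)) : Finset (Fin n) :=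
  DesRel (FMle P M)

/-- `Des(M_r, M)`. -/
def DesMr (P : PartialOrder (Fin n)) (Mr M : Finset (ConnIdeal P)) : Finset (Fin n) :=
  (DesM P M).filter (fun i => ∃ J ∈ Mr, J.1 \ mu P M J.1 = {i})

/-- `Des̄(M_r, M)`. -/
def DesBarMr (P : PartialOrder (Fin n)) (Mr M : Finset (ConnIdeal P)) :
    Finset (ConnIdeal P) :=
  Mr.filter (fun J => ∃ i ∈ DesMr P Mr M, J.1 \ mu P M J.1 = {i})

/-- The relation `le` is (the order relation of) a `P`-forest: a partial order
whose Hasse diagram is a forest, all of whose principal order ideals are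
connected order ideals of `P`, and such that for incomparable `i, j` the union
`Λ_i ∪ Λ_j` is a disconnected order ideal of `P`. -/
structure IsPForestRel (P : PartialOrder (Fin n)) (le : Fin n → Fin n → Prop) : Prop where
  refl : ∀ i, le i i
  trans : ∀ i j k, le i j → le j k → le i k
  antisymm : ∀ i j, le i j → le j i → i = j
  forest : ∀ i j k, CovRel le i j → CovRel le i k → j = k
  connIdeal : ∀ i, IsConnIdeal P (LamRel le i)
  disc : ∀ i j : Fin n, ¬ le i j → ¬ le j i →
    IsIdeal P (LamRel le i ∪ LamRel le j) ∧ ¬ JConn P (LamRel le i ∪ LamRel le j)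

/-- The principal order ideal `Λ_i^P` of `P`. -/
def PIdeal (P : PartialOrder (Fin n)) (i : Fin n) : Finset (Fin n) :=
  Finset.univ.filter (fun k => P.le k i)

/-- The generating set `gs(J)`: the maximal elements of `J` with respect to `P`. -/
def gsJ (P : PartialOrder (Fin n)) (J : Finset (Fin n)) : Finset (Fin n) :=
  J.filter (fun i => ∀ j ∈ J, ¬ P.lt i j)

/-- `P` is naturally labeled. -/
def NatLabeled (P : PartialOrder (Fin n)) : Prop :=
  ∀ i j : Fin n, P.lt i j → i < j

/-- `U_max(M, J)`: the maximal members of `U(M,J) = {J' ∈ M : J' ⊊ J}`. -/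
def Umax (P : PartialOrder (Fin n)) (M : Finset (ConnIdeal P)) (J : Finset (Fin n)) :
    Finset (ConnIdeal P) :=
  (M.filter (fun Ja => Ja.1 ⊂ J)).filter
    (fun Ja => ∀ Jb ∈ M, Jb.1 ⊂ J → Jb ≠ Ja → ¬ Ja.1 ⊂ Jb.1)

/-- The set of vertices of `G_P` which are principal order ideals of `P`. -/
def PIdealSet (P : PartialOrder (Fin n)) : Set (ConnIdeal P) :=
  {A : ConnIdeal P | ∃ i : Fin n, A.1 = PIdeal P i}

/-- The graph `H_P`: the subgraph of `G_P` induced by the principal order ideals. -/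
def HP (P : PartialOrder (Fin n)) : SimpleGraph (PIdealSet P) :=
  (GP P).induce (PIdealSet P)

/-- `f` is a `P`-partition. -/
def IsPPartition (P : PartialOrder (Fin n)) (f : Fin n → ℕ) : Prop :=
  (∀ i j : Fin n, P.lt i j → f j ≤ f i) ∧
  (∀ i j : Fin n, P.lt i j → j < i → f j < f i)

/-- The monomial `∏_{k ∈ J} x_k`. -/
def xJ (J : Finset (Fin n)) : MvPowerSeries (Fin n) ℚ :=
  ∏ k ∈ J, MvPowerSeries.X k

/-- The set of linear extensions of `P`, viewed as permutations `w` of `Fin n`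
(in positions `0, …, n-1`) such that `i < j` whenever `w i <_P w j`. -/
def LinExts (P : PartialOrder (Fin n)) : Finset (Equiv.Perm (Fin n)) :=
  Finset.univ.filter (fun w => ∀ i j : Fin n, P.lt (w i) (w j) → i < j)

/-- The major index of a permutation (with 1-indexed positions). -/
def maj (w : Equiv.Perm (Fin n)) : ℕ :=
  ∑ i ∈ Finset.univ.filter
      (fun i : Fin n => ∃ h : (i : ℕ) + 1 < n, w ⟨(i : ℕ) + 1, h⟩ < w i),
    ((i : ℕ) + 1)

/-- The finset of maximum independent sets of the connected component `c` of `G_P`. -/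
def MaxIndepsOn (P : PartialOrder (Fin n)) (c : (GP P).ConnectedComponent) :
    Finset (Finset (ConnIdeal P)) :=
  Finset.univ.filter (fun Mr : Finset (ConnIdeal P) => IsMaxIndepOn (GP P) c.supp Mr)
/-- Every element of a finite set has a maximal element of the set above it. -/
lemma exists_gs_ge (P : PartialOrder (Fin n)) (J : Finset (Fin n)) :
    ∀ x ∈ J, ∃ m ∈ gsJ P J, P.le x m := by
  suffices h : ∀ k, ∀ x ∈ J, (J.filter (fun y => P.lt x y)).card ≤ k →
      ∃ m ∈ gsJ P J, P.le x m by
    intro x hx; exact h _ x hx le_rfl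
  intro k
  induction k with
  | zero =>
    intro x hx hc
    refine ⟨x, Finset.mem_filter.2 ⟨hx, ?_⟩, P.le_refl x⟩
    intro y hy hlt
    have hmem : y ∈ J.filter (fun y => P.lt x y) := Finset.mem_filter.2 ⟨hy, hlt⟩
    have := Finset.card_pos.2 ⟨y, hmem⟩
    omega
  | succ k ih =>
    intro x hx hc
    by_cases hmax : ∀ y ∈ J, ¬ P.lt x y
    · exact ⟨x, Finset.mem_filter.2 ⟨hx, hmax⟩, P.le_refl x⟩
    · push_neg at hmax
      obtain ⟨y, hy, hlt⟩ := hmax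
      have hsub : (J.filter (fun z => P.lt y z)) ⊂ (J.filter (fun z => P.lt x z)) := by
        constructor
        · intro z hz
          rcases Finset.mem_filter.1 hz with ⟨hzJ, hyz⟩
          exact Finset.mem_filter.2 ⟨hzJ, @lt_trans _ P.toPreorder _ _ _ hlt hyz⟩
        · intro hcon
          have hy' : y ∈ J.filter (fun z => P.lt x z) := Finset.mem_filter.2 ⟨hy, hlt⟩
          have := (Finset.mem_filter.1 (hcon hy')).2
          exact @lt_irrefl _ P.toPreorder y this
      have hcard := Finset.card_lt_card hsub
      obtain ⟨m, hm, hle⟩ := ih y hy (by omega)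
      exact ⟨m, hm, P.le_trans _ _ _ (@le_of_lt _ P.toPreorder _ _ hlt) hle⟩

/-- Principal order ideals of `P` are connected order ideals. -/
lemma pideal_conn (P : PartialOrder (Fin n)) (m : Fin n) :
    IsConnIdeal P (PIdeal P m) := by
  constructor
  · intro i hi j hji
    simp only [PIdeal, Finset.mem_filter, Finset.mem_univ, true_and] at *
    exact P.le_trans _ _ _ hji hi
  · rw [JConn, SimpleGraph.connected_iff]
    have hm : m ∈ (↑(PIdeal P m) : Set (Fin n)) := by
      simp [PIdeal, P.le_refl]
    refine ⟨?_, ⟨⟨m, hm⟩⟩⟩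
    have star : ∀ a : (↑(PIdeal P m) : Set (Fin n)),
        ((compGraph P).induce (↑(PIdeal P m) : Set (Fin n))).Reachable a ⟨m, hm⟩ := by
      intro a
      by_cases hEq : a.1 = m
      · rw [show a = (⟨m, hm⟩ : (↑(PIdeal P m) : Set (Fin n))) from Subtype.ext hEq]
      · have ham : P.le a.1 m := by
          have := a.2
          simp only [Finset.coe_filter, PIdeal, Set.mem_setOf_eq, Finset.mem_univ,
            true_and] at this
          exact this
        exact SimpleGraph.Adj.reachable ⟨hEq, Or.inl ham⟩
    intro a b
    exact (star a).trans (star b).symm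

/-- The canonical vertex of `χ_J` associated with `m ∈ gs(J)`. -/
def vtx (P : PartialOrder (Fin n)) (J : Finset (Fin n)) (m : Fin n) (hm : m ∈ gsJ P J) :
    ↑{A : ConnIdeal P | ∃ i ∈ gsJ P J, A.1 = PIdeal P i} :=
  ⟨⟨PIdeal P m, pideal_conn P m⟩, ⟨m, hm, rfl⟩⟩

/-- Lemma 3.1: for any connected order ideal `J` of `P`, the
subgraph `χ_J` of `G_P` induced by the vertex set `{Λ_i^P : i ∈ gs(J)}` is
connected. -/
theorem statement_9 (n : ℕ) (P : PartialOrder (Fin n))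
    (J : Finset (Fin n)) (hJ : IsConnIdeal P J) :
    ((GP P).induce {A : ConnIdeal P | ∃ i ∈ gsJ P J, A.1 = PIdeal P i}).Connected := by
  set G' := (GP P).induce {A : ConnIdeal P | ∃ i ∈ gsJ P J, A.1 = PIdeal P i} with hG'
  -- reachability of canonical vertices having a common lower bound
  have reach_common : ∀ (x m1 m2 : Fin n) (hm1 : m1 ∈ gsJ P J) (hm2 : m2 ∈ gsJ P J),
      P.le x m1 → P.le x m2 → G'.Reachable (vtx P J m1 hm1) (vtx P J m2 hm2) := by
    intro x m1 m2 hm1 hm2 h1 h2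
    by_cases hEq : m1 = m2
    · subst hEq
      rfl
    · apply SimpleGraph.Adj.reachable
      show (GP P).Adj _ _
      have maximal : ∀ (a b : Fin n), a ∈ gsJ P J → b ∈ gsJ P J → a ≠ b →
          ¬ (PIdeal P a ⊆ PIdeal P b) := by
        intro a b ha hb hab hsub
        have haa : a ∈ PIdeal P a := by simp [PIdeal, P.le_refl]
        have hle : P.le a b := by
          have := hsub haa
          simpa [PIdeal] using this
        rcases Finset.mem_filter.1 ha with ⟨haJ, hamax⟩
        rcases Finset.mem_filter.1 hb with ⟨hbJ, _⟩
        have hnlt := hamax b hbJ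
        rw [P.lt_iff_le_not_ge] at hnlt
        push_neg at hnlt
        exact hab (P.le_antisymm _ _ hle (hnlt hle))
      have hx : x ∈ PIdeal P m1 ∩ PIdeal P m2 := by
        simp only [Finset.mem_inter, PIdeal, Finset.mem_filter, Finset.mem_univ, true_and]
        exact ⟨h1, h2⟩
      exact ⟨⟨x, hx⟩, maximal m1 m2 hm1 hm2 hEq, maximal m2 m1 hm2 hm1 (Ne.symm hEq)⟩
  have key : ∀ (a b : ↑(↑J : Set (Fin n)))
      (w : ((compGraph P).induce (↑J : Set (Fin n))).Walk a b),
      ∀ ma, ∀ hma : ma ∈ gsJ P J, ∀ mb, ∀ hmb : mb ∈ gsJ P J,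
      P.le a.1 ma → P.le b.1 mb → G'.Reachable (vtx P J ma hma) (vtx P J mb hmb) := by
    intro a b w
    induction w with
    | nil =>
      intro ma hma mb hmb h1 h2
      exact reach_common _ ma mb hma hmb h1 h2
    | @cons a c b h p ih =>
      intro ma hma mb hmb h1 h2
      obtain ⟨m, hm, hcm⟩ := exists_gs_ge P J c.1 (Finset.mem_coe.1 c.2)
      have hadj : (compGraph P).Adj a.1 c.1 := h
      rcases hadj.2 with hac | hca
      · exact (reach_common a.1 ma m hma hm h1 (P.le_trans _ _ _ hac hcm)).trans
          (ih m hm mb hmb hcm h2)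
      · exact (reach_common c.1 ma m hma hm (P.le_trans _ _ _ hca h1) hcm).trans
          (ih m hm mb hmb hcm h2)
  rw [SimpleGraph.connected_iff]
  have hJconn := hJ.2
  obtain ⟨⟨x0, hx0⟩⟩ := hJconn.nonempty
  obtain ⟨m0, hm0, _⟩ := exists_gs_ge P J x0 (Finset.mem_coe.1 hx0)
  refine ⟨?_, ⟨vtx P J m0 hm0⟩⟩
  intro A B
  obtain ⟨i, hi, hAi⟩ := A.2
  obtain ⟨j, hj, hBj⟩ := B.2
  have hA : A = vtx P J i hi := Subtype.ext (Subtype.ext hAi)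
  have hB : B = vtx P J j hj := Subtype.ext (Subtype.ext hBj)
  rw [hA, hB]
  have hiJ : i ∈ J := (Finset.mem_filter.1 hi).1
  have hjJ : j ∈ J := (Finset.mem_filter.1 hj).1
  obtain ⟨w⟩ := hJconn.preconnected ⟨i, Finset.mem_coe.2 hiJ⟩ ⟨j, Finset.mem_coe.2 hjJ⟩
  exact key _ _ w i hi j hj (P.le_refl i) (P.le_refl j)
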